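/- Let (X,d) be a complete pseudometric space and A ⊆ X. Then A is a complete subset of X if and only if for every point x in the topological boundary of A, the intersection [x]_0 ∩ A is nonempty. -/
import Mathlib


/-- A subset `A` of a pseudometric space is complete if every Cauchy sequence
of points of `A` converges to some point of `A`. -/
def IsCompleteSubset {X : Type*} [PseudoMetricSpace X] (A : Set X) : Prop :=
  ∀ u : ℕ → X, (∀ n, u n ∈ A) → CauchySeq u →
    ∃ a ∈ A, Filter.Tendsto u Filter.atTop (nhds a)

/-- In a complete pseudometric space, `A` is complete iff every boundary
point of `A` has zero-distance class meeting `A`. -/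
theorem complete_iff_frontier_classes_meet {X : Type*} [PseudoMetricSpace X]
    [CompleteSpace X] (A : Set X) :
    IsCompleteSubset A ↔
      ∀ x ∈ frontier A, ({z : X | dist x z = 0} ∩ A).Nonempty := by
  constructor
  · intro hA x hx
    have hxc : x ∈ closure A := hx.1
    obtain ⟨u, hu, hux⟩ := mem_closure_iff_seq_limit.mp hxc
    have hcauchy : CauchySeq u := hux.cauchySeq
    obtain ⟨a, haA, hua⟩ := hA u hu hcauchy
    refine ⟨a, ?_, haA⟩
    have h1 : Filter.Tendsto (fun n => dist x (u n)) Filter.atTop (nhds 0) := by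
      simpa [dist_comm] using (tendsto_iff_dist_tendsto_zero.mp hux)
    have h2 : Filter.Tendsto (fun n => dist (u n) a) Filter.atTop (nhds 0) :=
      tendsto_iff_dist_tendsto_zero.mp hua
    have h0 : Filter.Tendsto (fun n => dist x (u n) + dist (u n) a)
        Filter.atTop (nhds 0) := by simpa using h1.add h2
    have hle : dist x a ≤ 0 :=
      le_of_tendsto_of_tendsto' tendsto_const_nhds h0 fun n => dist_triangle x (u n) a
    exact le_antisymm hle dist_nonneg
  · intro h u hu hcauchy
    obtain ⟨x, hx⟩ := cauchySeq_tendsto_of_complete hcauchy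
    have hxc : x ∈ closure A := mem_closure_of_tendsto hx (Filter.Eventually.of_forall hu)
    by_cases hfr : x ∈ frontier A
    · obtain ⟨z, hz0, hzA⟩ := h x hfr
      refine ⟨z, hzA, ?_⟩
      have hi : Inseparable x z := Metric.inseparable_iff.mpr hz0
      rwa [← hi.nhds_eq]
    · have : x ∈ interior A := by
        rw [closure_eq_interior_union_frontier] at hxc
        exact hxc.resolve_right hfr
      exact ⟨x, interior_subset this, hx⟩
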